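/- Let d ≥ 2 be an integer and let w be an unbordered 7/4⁺-power-free word of length D+1. Then ∑_{j=1}^{⌈(D+1)/2⌉} ∑_{r ∈ R_j(w)} d^{−(r−j)} ≤ 4/(d−1). -/

import Mathlib

open scoped BigOperators Classical

namespace Kautz

/-- A vertex of the Kautz digraph `K(d,D)`: a word of length `D` over the
alphabet `{0,1,…,d}` in which adjacent letters are distinct. -/
structure Vertex (d D : ℕ) where
  word : List (Fin (d+1))
  length_eq : word.length = D
  chain : word.Chain' (· ≠ ·)

/-- Adjacency in `K(d,D)`: there is an edge `u → v` iff some word `w` of length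
`D+1` with adjacent letters distinct has `u` as its prefix of length `D` and
`v` as its suffix of length `D`. -/
def Adj {d D : ℕ} (u v : Vertex d D) : Prop :=
  ∃ w : List (Fin (d+1)), w.length = D + 1 ∧ w.Chain' (· ≠ ·) ∧
    u.word = w.dropLast ∧ v.word = w.tail

/-- A directed edge of `K(d,D)`. -/
structure Edge (d D : ℕ) where
  src : Vertex d D
  tgt : Vertex d D
  adj : Adj src tgt

/-- The edge-word `w(e) = a₀a₁⋯a_D` of an edge `e : u → v`, namely `u`
followed by the last letter of `v`. -/
def Edge.word {d D : ℕ} (e : Edge d D) : List (Fin (d+1)) :=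
  e.src.word ++ e.tgt.word.drop (D - 1)

/-- `p` is a walk from `x` to `y`, recorded as the list of successive vertices. -/
def IsWalk {d D : ℕ} (p : List (Vertex d D)) (x y : Vertex d D) : Prop :=
  p.head? = some x ∧ p.getLast? = some y ∧ p.Chain' Adj

/-- Directed graph distance in `K(d,D)`. -/
noncomputable def dist {d D : ℕ} (x y : Vertex d D) : ℕ :=
  sInf {k | ∃ p : List (Vertex d D), IsWalk p x y ∧ p.length = k + 1}

/-- `N(e;k,t)`: the number of ordered pairs `(x,y)` with `dist x y = k` such
that some geodesic (walk of length `k = dist x y`) from `x` to `y` uses `e` as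
its `t`-th edge. -/
noncomputable def N {d D : ℕ} (e : Edge d D) (k t : ℕ) : ℕ :=
  Set.ncard {xy : Vertex d D × Vertex d D |
    dist xy.1 xy.2 = k ∧
    ∃ p : List (Vertex d D), IsWalk p xy.1 xy.2 ∧ p.length = k + 1 ∧
      p[t-1]? = some e.src ∧ p[t]? = some e.tgt}

/-- `U_k(e) = ∑_{t=1}^{k} N(e;k,t)`. -/
noncomputable def U {d D : ℕ} (e : Edge d D) (k : ℕ) : ℕ :=
  ∑ t ∈ Finset.Icc 1 k, N e k t

/-- `cong(e) = ∑_{k=1}^{D} U_k(e)`. -/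
noncomputable def cong {d D : ℕ} (e : Edge d D) : ℕ :=
  ∑ k ∈ Finset.Icc 1 D, U e k

/-- `τ(d,D) = (D−1)·d^{D−2} + D·d^{D−1}`. -/
def tau (d D : ℕ) : ℕ := (D - 1) * d ^ (D - 2) + D * d ^ (D - 1)

/-- A word has a border: some proper nonempty prefix equals the suffix of the
same length. -/
def HasBorder {α : Type*} (w : List α) : Prop :=
  ∃ ℓ, 1 ≤ ℓ ∧ ℓ ≤ w.length - 1 ∧ w.take ℓ = w.drop (w.length - ℓ)

/-- An unbordered word. -/
def Unbordered {α : Type*} (w : List α) : Prop := ¬ HasBorder w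

/-- A square-free word: no nonempty factor of the form `XX`. -/
def SquareFree {α : Type*} (w : List α) : Prop :=
  ¬ ∃ X : List α, X ≠ [] ∧ (X ++ X) <:+: w

/-- A `7/4⁺`-power-free word: no factor `x^k y` with `x` nonempty, `k ≥ 1`,
`y` a prefix of `x`, and `(k·|x| + |y|)/|x| > 7/4`. -/
def SevenFourthsPlusFree {α : Type*} (w : List α) : Prop :=
  ¬ ∃ (x y : List α) (k : ℕ), x ≠ [] ∧ 1 ≤ k ∧ y <+: x ∧
    ((List.replicate k x).flatten ++ y) <:+: w ∧
    7 * x.length < 4 * (k * x.length + y.length)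

/-- A word over `{0,1,…,d}` is ternary if it uses only the letters `{0,1,2}`. -/
def IsTernary {n : ℕ} (w : List (Fin n)) : Prop := ∀ a ∈ w, (a : ℕ) < 3

/-- The suffix of `w` of length `t`. -/
def suffixWord {α : Type*} (w : List α) (t : ℕ) : List α := w.drop (w.length - t)

/-- `R_t(w)`: the set of admissible overlap lengths `r` at position `t`, i.e.
those `r` with `t+1 ≤ r ≤ |w|−t−1` such that `w = A·B·V·B` where `B` is the
suffix of `w` of length `t`, `V` is nonempty, and `|B·V| = r`. -/
noncomputable def Rt {α : Type*} (w : List α) (t : ℕ) : Finset ℕ :=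
  (Finset.Icc (t + 1) (w.length - t - 1)).filter fun r =>
    ∃ A V : List α, V ≠ [] ∧
      w = A ++ suffixWord w t ++ V ++ suffixWord w t ∧ t + V.length = r

/-- The deficit `Δ_t(e) = d^{D−1} − N(e;D,t)`. -/
noncomputable def deficit {d D : ℕ} (e : Edge d D) (t : ℕ) : ℝ :=
  (d : ℝ) ^ (D - 1) - (N e D t : ℝ)

/-- The total deficit `Δ(e) = ∑_{t=1}^{D} Δ_t(e)`. -/
noncomputable def totalDeficit {d D : ℕ} (e : Edge d D) : ℝ :=
  ∑ t ∈ Finset.Icc 1 D, deficit e t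

/-- The weighted overlap count
`Ω_d(e) = ∑_{j=1}^{⌈(D+1)/2⌉} ∑_{r ∈ R_j(w(e))} d^{−(r−j)}`. -/
noncomputable def Omega {d D : ℕ} (e : Edge d D) : ℝ :=
  ∑ j ∈ Finset.Icc 1 ((D + 2) / 2), ∑ r ∈ Rt e.word j, (d : ℝ) ^ ((j : ℤ) - (r : ℤ))

/-- The overlap `ov(u,v)`: the largest `j ≤ D` such that the last `j` letters
of `u` equal the first `j` letters of `v`. -/
noncomputable def ov {d D : ℕ} (u v : Vertex d D) : ℕ :=
  sSup {j | j ≤ D ∧ u.word.drop (D - j) = v.word.take j}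

end Kautz

section Aux18
variable {α : Type*}

lemma aux_key18 (C : List α) (hC : C ≠ []) (B : List α) (h : B <+: C ++ B) :
    ∃ k y, 1 ≤ k ∧ y <+: C ∧ C ++ B = (List.replicate k C).flatten ++ y ∧
      k * C.length + y.length = C.length + B.length := by
  by_cases hle : B.length ≤ C.length
  · refine ⟨1, B, le_refl 1, ?_, by simp, by simp⟩
    have h1 : B = (C ++ B).take B.length := List.prefix_iff_eq_take.mp h
    rw [List.take_append_of_le_length hle] at h1
    exact h1 ▸ List.take_prefix _ _
  · push_neg at hle
    have hCB : C <+: B := by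
      obtain ⟨t, ht⟩ := h
      have h1 : C = (B ++ t).take C.length := by
        rw [ht, List.take_append_of_le_length (le_refl _), List.take_length]
      rw [List.take_append_of_le_length hle.le] at h1
      exact h1 ▸ List.take_prefix _ _
    obtain ⟨B', rfl⟩ := hCB
    have h' : B' <+: C ++ B' := by
      obtain ⟨t, ht⟩ := h
      rw [List.append_assoc] at ht
      exact ⟨t, List.append_cancel_left ht⟩
    obtain ⟨k, y, hk, hy, heq, hlen⟩ := aux_key18 C hC B' h'
    refine ⟨k + 1, y, by omega, hy, ?_, ?_⟩
    · rw [List.replicate_succ, List.flatten_cons, List.append_assoc, ← heq]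
    · simp only [List.length_append] at hlen ⊢
      have : (k + 1) * C.length = k * C.length + C.length := by ring
      omega
termination_by B.length
decreasing_by
  have h2 := congrArg List.length ‹C ++ B' = B›
  simp only [List.length_append] at h2
  have := List.length_pos_iff.mpr hC
  omega

end Aux18

section Aux18b
variable {α : Type*}

lemma aux_mem_Rt18 {w : List α} {j r : ℕ} (h : r ∈ Kautz.Rt w j) :
    j + 1 ≤ r ∧ r + j + 1 ≤ w.length ∧
    ∃ A V : List α, V ≠ [] ∧
      w = A ++ Kautz.suffixWord w j ++ V ++ Kautz.suffixWord w j ∧ j + V.length = r := by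
  simp only [Kautz.Rt, Finset.mem_filter, Finset.mem_Icc] at h
  obtain ⟨⟨h1, h2⟩, A, V, hV, hw, hr⟩ := h
  exact ⟨h1, by omega, A, V, hV, hw, hr⟩

lemma aux_suffix_len18 {w : List α} {j : ℕ} (hj : j ≤ w.length) :
    (Kautz.suffixWord w j).length = j := by
  simp only [Kautz.suffixWord, List.length_drop]
  omega

lemma aux_min18 {w : List α} (h74 : Kautz.SevenFourthsPlusFree w) {j r : ℕ} (hj : 1 ≤ j)
    (hr : r ∈ Kautz.Rt w j) : 4 * j ≤ 3 * r := by
  obtain ⟨h1, h2, A, V, hV, hw, hrr⟩ := aux_mem_Rt18 hr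
  set S := Kautz.suffixWord w j with hSdef
  have hSlen : S.length = j := aux_suffix_len18 (by omega)
  by_contra hcon
  push_neg at hcon
  apply h74
  refine ⟨S ++ V, S, 1, by simp [hV], le_refl 1, List.prefix_append S V, ?_, ?_⟩
  · refine List.IsSuffix.isInfix ⟨A, ?_⟩
    rw [hw]; simp [List.append_assoc]
  · simp only [List.length_append, hSlen, one_mul]
    omega

lemma aux_gap18 {w : List α} (h74 : Kautz.SevenFourthsPlusFree w) {j r r' : ℕ} (hj : 1 ≤ j)
    (hr : r ∈ Kautz.Rt w j) (hr' : r' ∈ Kautz.Rt w j) (hlt : r < r') :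
    4 * j ≤ 3 * (r' - r) := by
  obtain ⟨h1, h2, A, V, hV, hw, hrr⟩ := aux_mem_Rt18 hr
  obtain ⟨h1', h2', A', V', hV', hw', hrr'⟩ := aux_mem_Rt18 hr'
  set S := Kautz.suffixWord w j with hSdef
  have hSlen : S.length = j := aux_suffix_len18 (by omega)
  have hAlen : w.length = A.length + r + j := by
    have := congrArg List.length hw
    simp only [List.length_append, hSlen] at this
    omega
  have hA'len : w.length = A'.length + r' + j := by
    have := congrArg List.length hw'
    simp only [List.length_append, hSlen] at this
    omega
  have hAw : A <+: w := ⟨S ++ V ++ S, by rw [hw]; simp [List.append_assoc]⟩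
  have hA'w : A' <+: w := ⟨S ++ V' ++ S, by rw [hw']; simp [List.append_assoc]⟩
  have hpre : A' <+: A := List.prefix_of_prefix_length_le hA'w hAw (by omega)
  obtain ⟨C, rfl⟩ := hpre
  have hAClen : (A' ++ C).length = A'.length + C.length := List.length_append
  have hClen : C.length = r' - r := by omega
  have hCne : C ≠ [] := by
    intro hnil
    rw [hnil] at hClen
    simp at hClen
    omega
  have hE : S ++ (V' ++ S) = C ++ (S ++ (V ++ S)) := by
    have e1 : A' ++ (S ++ (V' ++ S)) = w := by rw [hw']; simp [List.append_assoc]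
    have e2 : A' ++ (C ++ (S ++ (V ++ S))) = w := by rw [hw]; simp [List.append_assoc]
    exact List.append_cancel_left (e1.trans e2.symm)
  have hSpre : S <+: C ++ S := by
    have e3 : (C ++ S) ++ (V ++ S) = S ++ (V' ++ S) := by
      rw [List.append_assoc, ← hE]
    have p1 : S <+: (C ++ S) ++ (V ++ S) := by
      rw [e3]; exact List.prefix_append _ _
    exact List.prefix_of_prefix_length_le p1 (List.prefix_append _ _)
      (by simp [hSlen])
  obtain ⟨k, y, hk, hy, heq, hlen2⟩ := aux_key18 C hCne S hSpre
  by_contra hcon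
  push_neg at hcon
  apply h74
  refine ⟨C, y, k, hCne, hk, hy, ?_, ?_⟩
  · rw [← heq]
    have hsub : C ++ S <+: C ++ (S ++ (V ++ S)) := ⟨V ++ S, by simp [List.append_assoc]⟩
    have hsuf : C ++ (S ++ (V ++ S)) <:+ w := ⟨A', by rw [hw]; simp [List.append_assoc]⟩
    exact hsub.isInfix.trans hsuf.isInfix
  · rw [hlen2]
    omega

end Aux18b

section Aux18c

lemma aux_gapSum18 (x : ℝ) (hx0 : 0 ≤ x) (hx1 : x < 1) (δ : ℕ) (hδ : 1 ≤ δ) :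
    ∀ (n : ℕ) (R : Finset ℕ) (m : ℕ), R.card = n → (∀ r ∈ R, m ≤ r) →
      (∀ r ∈ R, ∀ r' ∈ R, r < r' → r + δ ≤ r') →
      ∑ r ∈ R, x ^ r ≤ x ^ m / (1 - x ^ δ) := by
  have hxδ : x ^ δ < 1 := pow_lt_one₀ hx0 hx1 (by omega)
  have hpos : (0:ℝ) < 1 - x ^ δ := by linarith
  intro n
  induction n with
  | zero =>
    intro R m hcard _ _
    rw [Finset.card_eq_zero] at hcard
    subst hcard
    simp only [Finset.sum_empty]
    positivity
  | succ n ih =>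
    intro R m hcard hm hgap
    have hne : R.Nonempty := by
      rw [← Finset.card_pos, hcard]; omega
    set r0 := R.min' hne with hr0
    have hr0mem : r0 ∈ R := R.min'_mem hne
    have hsum : ∑ r ∈ R.erase r0, x ^ r + x ^ r0 = ∑ r ∈ R, x ^ r :=
      Finset.sum_erase_add R _ hr0mem
    have herase : ∑ r ∈ R.erase r0, x ^ r ≤ x ^ (r0 + δ) / (1 - x ^ δ) := by
      apply ih (R.erase r0) (r0 + δ)
      · rw [Finset.card_erase_of_mem hr0mem, hcard]; omega
      · intro r hrm
        have hmem := Finset.mem_of_mem_erase hrm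
        have hne' := Finset.ne_of_mem_erase hrm
        have hle := R.min'_le r hmem
        exact hgap r0 hr0mem r hmem (by omega)
      · intro r hra r' hrb hlt
        exact hgap r (Finset.mem_of_mem_erase hra) r' (Finset.mem_of_mem_erase hrb) hlt
    have hkey : x ^ r0 + x ^ (r0 + δ) / (1 - x ^ δ) = x ^ r0 / (1 - x ^ δ) := by
      rw [pow_add]
      field_simp
      ring
    have hstep : ∑ r ∈ R, x ^ r ≤ x ^ r0 / (1 - x ^ δ) := by
      rw [← hsum, ← hkey]; linarith
    refine hstep.trans ?_
    have hnum : x ^ r0 ≤ x ^ m := pow_le_pow_of_le_one hx0 hx1.le (hm r0 hr0mem)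
    exact (div_le_div_iff_of_pos_right hpos).mpr hnum

end Aux18c

section Aux18d

lemma aux_geom18 (x : ℝ) (hx0 : 0 ≤ x) (hx1 : x < 1) (S : ℕ) :
    ∑ s ∈ Finset.Icc 1 S, x ^ s ≤ x / (1 - x) := by
  have hpos : (0:ℝ) < 1 - x := by linarith
  have hid : ∀ T : ℕ, (1 - x) * ∑ s ∈ Finset.Icc 1 T, x ^ s = x - x ^ (T + 1) := by
    intro T
    induction T with
    | zero => simp
    | succ T ih =>
      rw [Finset.sum_Icc_succ_top (by omega), mul_add, ih]
      ring
  rw [le_div_iff₀ hpos, mul_comm, hid S]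
  have := pow_nonneg hx0 (S + 1)
  linarith

lemma aux_outer18 (x : ℝ) (hx0 : 0 ≤ x) (hx1 : x < 1) (J : ℕ) :
    ∑ j ∈ Finset.Icc 1 J, x ^ ((j + 2) / 3) ≤ 3 * x / (1 - x) := by
  classical
  have hinj : ∀ a ∈ Finset.Icc 1 J, ∀ b ∈ Finset.Icc 1 J,
      (fun j => ((j + 2) / 3, j % 3)) a = (fun j => ((j + 2) / 3, j % 3)) b → a = b := by
    intro a _ b _ h
    simp only [Prod.mk.injEq] at h
    omega
  calc ∑ j ∈ Finset.Icc 1 J, x ^ ((j + 2) / 3)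
      = ∑ p ∈ (Finset.Icc 1 J).image (fun j => ((j + 2) / 3, j % 3)), x ^ p.1 :=
        (Finset.sum_image (f := fun p => x ^ p.1) hinj).symm
    _ ≤ ∑ p ∈ (Finset.Icc 1 ((J + 2) / 3)) ×ˢ (Finset.range 3), x ^ p.1 := by
        apply Finset.sum_le_sum_of_subset_of_nonneg
        · intro p hp
          simp only [Finset.mem_image, Finset.mem_Icc] at hp
          obtain ⟨j, ⟨hj1, hj2⟩, rfl⟩ := hp
          simp only [Finset.mem_product, Finset.mem_Icc, Finset.mem_range]
          omega
        · intro p _ _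
          positivity
    _ = ∑ s ∈ Finset.Icc 1 ((J + 2) / 3), ∑ i ∈ Finset.range 3, x ^ s := by
        rw [Finset.sum_product]
    _ = 3 * ∑ s ∈ Finset.Icc 1 ((J + 2) / 3), x ^ s := by
        rw [Finset.mul_sum]
        apply Finset.sum_congr rfl
        intro s _
        rw [Finset.sum_const, Finset.card_range]
        push_cast
        ring
    _ ≤ 3 * (x / (1 - x)) := by
        have := aux_geom18 x hx0 hx1 ((J + 2) / 3)
        linarith
    _ = 3 * x / (1 - x) := by ring

lemma aux_final18 (c : ℝ) (hc : 2 ≤ c) :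
    (3 * c⁻¹ / (1 - c⁻¹)) / (1 - (c⁻¹) ^ 2) ≤ 4 / (c - 1) := by
  have hc0 : (0:ℝ) < c := by linarith
  have hx : c⁻¹ ≤ 1/2 := by
    rw [inv_le_comm₀ hc0 (by norm_num)]
    linarith
  have hx0 : (0:ℝ) < c⁻¹ := by positivity
  have h1 : (0:ℝ) < 1 - c⁻¹ := by linarith
  have h2 : (0:ℝ) < 1 - (c⁻¹) ^ 2 := by nlinarith
  have hcinv : c * c⁻¹ = 1 := mul_inv_cancel₀ (ne_of_gt hc0)
  rw [div_div, div_le_div_iff₀ (by positivity) (by linarith)]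
  nlinarith [mul_pos hx0 hx0, sq_nonneg (c⁻¹ - 1/2), mul_pos (mul_pos hx0 hx0) hx0]

end Aux18d


/-- For `d ≥ 2` and an unbordered `7/4⁺`-power-free word `w` of length `D+1`,
`∑_{j=1}^{⌈(D+1)/2⌉} ∑_{r ∈ R_j(w)} d^{−(r−j)} ≤ 4/(d−1)`. -/
theorem statement18 {α : Type*} (d D : ℕ) (hd : 2 ≤ d) (w : List α)
    (hlen : w.length = D + 1)
    (hub : Kautz.Unbordered w) (h74 : Kautz.SevenFourthsPlusFree w) :
    ∑ j ∈ Finset.Icc 1 ((D + 2) / 2), ∑ r ∈ Kautz.Rt w j,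
        (d : ℝ) ^ ((j : ℤ) - (r : ℤ))
      ≤ 4 / ((d : ℝ) - 1) := by
  have hdr : (2:ℝ) ≤ (d:ℝ) := by exact_mod_cast hd
  have hd0 : (0:ℝ) < (d:ℝ) := by linarith
  set x : ℝ := ((d:ℝ))⁻¹ with hxdef
  have hx0 : (0:ℝ) < x := inv_pos.mpr hd0
  have hxd : x * (d:ℝ) = 1 := inv_mul_cancel₀ (ne_of_gt hd0)
  have hx1 : x < 1 := by nlinarith
  have h2 : (0:ℝ) < 1 - x ^ 2 := by nlinarith
  have inner : ∀ j ∈ Finset.Icc 1 ((D + 2) / 2),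
      ∑ r ∈ Kautz.Rt w j, (d : ℝ) ^ ((j : ℤ) - (r : ℤ)) ≤ x ^ ((j + 2) / 3) / (1 - x ^ 2) := by
    intro j hjmem
    rw [Finset.mem_Icc] at hjmem
    have hj1 : 1 ≤ j := hjmem.1
    have hterm : ∀ r ∈ Kautz.Rt w j, (d : ℝ) ^ ((j : ℤ) - (r : ℤ)) = x ^ (r - j) := by
      intro r hr
      have h1 := (aux_mem_Rt18 hr).1
      have hcast : (j : ℤ) - (r : ℤ) = -((r - j : ℕ) : ℤ) := by
        rw [Nat.cast_sub (by omega)]; ring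
      rw [hcast, zpow_neg, zpow_natCast, hxdef, inv_pow]
    rw [Finset.sum_congr rfl hterm]
    have hinj : ∀ a ∈ Kautz.Rt w j, ∀ b ∈ Kautz.Rt w j, a - j = b - j → a = b := by
      intro a ha b hb h
      have := (aux_mem_Rt18 ha).1
      have := (aux_mem_Rt18 hb).1
      omega
    rw [← Finset.sum_image (f := fun t => x ^ t) (g := fun r => r - j) hinj]
    apply aux_gapSum18 x hx0.le hx1 2 (by norm_num) _ _ ((j + 2) / 3) rfl
    · intro t ht
      simp only [Finset.mem_image] at ht
      obtain ⟨r, hrm, rfl⟩ := ht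
      have h1 := (aux_mem_Rt18 hrm).1
      have h4 := aux_min18 h74 hj1 hrm
      omega
    · intro t ht t' ht' hlt
      simp only [Finset.mem_image] at ht ht'
      obtain ⟨r, hrm, rfl⟩ := ht
      obtain ⟨r', hrm', rfl⟩ := ht'
      have h1 := (aux_mem_Rt18 hrm).1
      have h1' := (aux_mem_Rt18 hrm').1
      have hrlt : r < r' := by omega
      have hgap := aux_gap18 h74 hj1 hrm hrm' hrlt
      omega
  calc ∑ j ∈ Finset.Icc 1 ((D + 2) / 2), ∑ r ∈ Kautz.Rt w j, (d : ℝ) ^ ((j : ℤ) - (r : ℤ))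
      ≤ ∑ j ∈ Finset.Icc 1 ((D + 2) / 2), x ^ ((j + 2) / 3) / (1 - x ^ 2) :=
        Finset.sum_le_sum inner
    _ = (∑ j ∈ Finset.Icc 1 ((D + 2) / 2), x ^ ((j + 2) / 3)) / (1 - x ^ 2) := by
        rw [Finset.sum_div]
    _ ≤ (3 * x / (1 - x)) / (1 - x ^ 2) := by
        exact (div_le_div_iff_of_pos_right h2).mpr (aux_outer18 x hx0.le hx1 _)
    _ ≤ 4 / ((d : ℝ) - 1) := by
        rw [hxdef]
        exact aux_final18 (d : ℝ) hdr
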